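/- Let α > 0, ρ' > 0, β > 0, β' > 0, g ≥ 0, γ' ≥ 0, α' > 0 and p ≥ 0. Then for every t > 0, ∫_0^t (t−s)^{ρ'−1} E_{α',ρ'}^{γ'}(β' (t−s)^{α'}) s^{p} E_{α,p+1}^{g}(-β s^α) ds = Σ_{r=0}^∞ ( (β')^{r} (γ')_r / r! ) t^{p + ρ' + r α'} E_{α, p + ρ' + r α' + 1}^{g}(-β t^α). -/

import Mathlib

open MeasureTheory Real Set

/-- Pochhammer symbol `(g)_k = g (g+1) ⋯ (g+k-1)`. -/
noncomputable def poch (g : ℝ) (k : ℕ) : ℝ := ∏ i ∈ Finset.range k, (g + i)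

/-- Three-parameter (Prabhakar) Mittag-Leffler function. -/
noncomputable def ml3 (a b g x : ℝ) : ℝ :=
  ∑' k : ℕ, poch g k * x ^ k / (Real.Gamma ((k : ℝ) * a + b) * (Nat.factorial k : ℝ))

/-- From log-convexity: `Γ(x+a) ≥ (x-1)^a Γ(x)` for `x > 1`, `a > 0`. -/
lemma Gamma_ratio_lower {x a : ℝ} (hx : 1 < x) (ha : 0 < a) :
    (x - 1) ^ a * Real.Gamma x ≤ Real.Gamma (x + a) := by
  have h0 : (0:ℝ) < x - 1 := by linarith
  have hxpos : (0:ℝ) < x := by linarith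
  have hslope := Real.convexOn_log_Gamma.slope_mono_adjacent
    (x := x - 1) (y := x) (z := x + a) (mem_Ioi.mpr h0) (mem_Ioi.mpr (by linarith))
    (by linarith) (by linarith)
  simp only [Function.comp] at hslope
  have hG1 : Real.Gamma x = (x - 1) * Real.Gamma (x - 1) := by
    have := Real.Gamma_add_one (by positivity : x - 1 ≠ 0)
    simpa [sub_add_cancel] using this
  have hGx : 0 < Real.Gamma x := Real.Gamma_pos_of_pos hxpos
  have hGx1 : 0 < Real.Gamma (x - 1) := Real.Gamma_pos_of_pos h0
  have hGxa : 0 < Real.Gamma (x + a) := Real.Gamma_pos_of_pos (by linarith)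
  have hlhs : (Real.log (Real.Gamma x) - Real.log (Real.Gamma (x-1))) / (x - (x-1))
      = Real.log (x - 1) := by
    rw [hG1, Real.log_mul (by positivity) (by positivity)]
    ring
  rw [hlhs] at hslope
  have h2 : a * Real.log (x-1) ≤ Real.log (Real.Gamma (x+a)) - Real.log (Real.Gamma x) := by
    have hd : x + a - x = a := by ring
    rw [hd] at hslope
    calc a * Real.log (x-1) = (Real.log (x-1)) * a := by ring
    _ ≤ ((Real.log (Real.Gamma (x + a)) - Real.log (Real.Gamma x)) / a) * a := by
        exact mul_le_mul_of_nonneg_right hslope ha.le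
    _ = _ := by field_simp
  have h3 : (x-1)^a * Real.Gamma x = Real.exp (a * Real.log (x-1) + Real.log (Real.Gamma x)) := by
    rw [Real.exp_add, Real.exp_log hGx, Real.rpow_def_of_pos h0, mul_comm (Real.log (x-1)) a]
  rw [h3, ← Real.exp_log hGxa]
  apply Real.exp_le_exp.mpr
  linarith

lemma poch_succ (g : ℝ) (k : ℕ) : poch g (k+1) = poch g k * (g + k) := by
  simp [poch, Finset.prod_range_succ]

lemma poch_nonneg {g : ℝ} (hg : 0 ≤ g) (k : ℕ) : 0 ≤ poch g k :=
  Finset.prod_nonneg fun i _ => by positivity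

/-- Core summability: Mittag-Leffler-type series with a linear weight. -/
lemma summable_ml_aux {a b g x c : ℝ} (ha : 0 < a) (hb : 0 < b) (hg : 0 ≤ g) (hc : 0 < c)
    (hx : 0 ≤ x) :
    Summable (fun k : ℕ => poch g k * x ^ k * (c + k) /
      (Real.Gamma ((k : ℝ) * a + b) * (Nat.factorial k : ℝ))) := by
  set f : ℕ → ℝ := fun k => poch g k * x ^ k * (c + k) /
      (Real.Gamma ((k : ℝ) * a + b) * (Nat.factorial k : ℝ)) with hf
  have hfnn : ∀ k, 0 ≤ f k := by
    intro k
    have hΓ : 0 < Real.Gamma ((k : ℝ) * a + b) := Real.Gamma_pos_of_pos (by positivity)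
    have := poch_nonneg hg k
    have : (0:ℝ) ≤ c + k := by positivity
    positivity
  apply summable_of_ratio_norm_eventually_le (r := 1/2) (by norm_num)
  have h1 : Filter.Tendsto (fun k : ℕ => ((k : ℝ) * a + b - 1)) Filter.atTop Filter.atTop := by
    apply Filter.tendsto_atTop_add_const_right
    apply Filter.tendsto_atTop_add_const_right
    exact (tendsto_natCast_atTop_atTop).atTop_mul_const ha
  have h2 : Filter.Tendsto (fun k : ℕ => ((k : ℝ) * a + b - 1) ^ a) Filter.atTop Filter.atTop :=
    (tendsto_rpow_atTop ha).comp h1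
  filter_upwards [h2.eventually_ge_atTop (4 * (g+1) * x + 1), h1.eventually_ge_atTop 1,
    Filter.eventually_ge_atTop 1] with k hR h1k hk1
  have hk1' : (1:ℝ) ≤ (k:ℕ) := by exact_mod_cast hk1
  have hΓ1 : 0 < Real.Gamma ((k : ℝ) * a + b) := Real.Gamma_pos_of_pos (by positivity)
  have hΓ2 : 0 < Real.Gamma ((k : ℝ) * a + b + a) := Real.Gamma_pos_of_pos (by positivity)
  set R : ℝ := ((k : ℝ) * a + b - 1) ^ a with hRdef
  have hRpos : 0 < R := by
    apply Real.rpow_pos_of_pos; linarith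
  have hGR : R * Real.Gamma ((k:ℝ)*a + b) ≤ Real.Gamma ((k:ℝ)*a + b + a) :=
    Gamma_ratio_lower (by linarith) ha
  set q : ℝ := ((g + k) * x * (c + (k:ℝ) + 1) * Real.Gamma ((k:ℝ)*a+b)) /
      ((c + k) * ((k:ℝ) + 1) * Real.Gamma ((k:ℝ)*a + b + a)) with hqdef
  have hck : (0:ℝ) < c + k := by positivity
  have hq : f (k+1) = f k * q := by
    rw [hf]
    simp only [poch_succ, Nat.factorial_succ, hqdef]
    push_cast
    have e1 : ((k:ℝ)+1) * a + b = (k:ℝ)*a + b + a := by ring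
    rw [e1]
    field_simp
    ring
  have hqle : q ≤ 1/2 := by
    rw [hqdef, div_le_iff₀ (by positivity)]
    calc (g + (k:ℝ)) * x * (c + (k:ℝ) + 1) * Real.Gamma ((k:ℝ)*a+b)
        ≤ ((g+1) * ((k:ℝ)+1)) * x * (2*(c + (k:ℝ))) * Real.Gamma ((k:ℝ)*a+b) := by
          gcongr
          · nlinarith [mul_nonneg hg (Nat.cast_nonneg (α := ℝ) k)]
          · linarith
      _ = (2*(g+1)*x) * ((c + (k:ℝ)) * ((k:ℝ)+1) * Real.Gamma ((k:ℝ)*a+b)) := by ring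
      _ ≤ (R/2) * ((c + (k:ℝ)) * ((k:ℝ)+1) * Real.Gamma ((k:ℝ)*a+b)) := by
          apply mul_le_mul_of_nonneg_right _ (by positivity)
          linarith
      _ = (c + (k:ℝ)) * ((k:ℝ)+1) * (R * Real.Gamma ((k:ℝ)*a+b)) * (1/2) := by ring
      _ ≤ (c + (k:ℝ)) * ((k:ℝ)+1) * Real.Gamma ((k:ℝ)*a + b + a) * (1/2) := by gcongr
      _ = 1/2 * ((c + (k:ℝ)) * ((k:ℝ)+1) * Real.Gamma ((k:ℝ)*a + b + a)) := by ring
  have hq0 : 0 ≤ q := by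
    rw [hqdef]
    have : (0:ℝ) ≤ g + k := by positivity
    positivity
  rw [Real.norm_eq_abs, Real.norm_eq_abs, abs_of_nonneg (hfnn _), abs_of_nonneg (hfnn _), hq]
  calc f k * q ≤ f k * (1/2) := mul_le_mul_of_nonneg_left hqle (hfnn k)
    _ = 1/2 * f k := by ring

/-- Real Beta integral. -/
lemma integral_beta01 {x y : ℝ} (hx : 0 < x) (hy : 0 < y) :
    ∫ u in (0:ℝ)..1, u ^ (x-1) * (1-u) ^ (y-1)
      = Real.Gamma x * Real.Gamma y / Real.Gamma (x+y) := by
  have h := Complex.Gamma_mul_Gamma_eq_betaIntegral (s := (x:ℂ)) (t := (y:ℂ))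
    (by simpa using hx) (by simpa using hy)
  have hb : Complex.betaIntegral (x:ℂ) (y:ℂ)
      = ((∫ u in (0:ℝ)..1, u ^ (x-1) * (1-u) ^ (y-1) : ℝ) : ℂ) := by
    rw [Complex.betaIntegral, ← intervalIntegral.integral_ofReal]
    apply intervalIntegral.integral_congr
    intro u hu
    rw [Set.uIcc_of_le (by norm_num : (0:ℝ) ≤ 1)] at hu
    beta_reduce
    rw [show ((x:ℂ) - 1) = ((x - 1 : ℝ) : ℂ) by push_cast; ring,
      show ((y:ℂ) - 1) = ((y - 1 : ℝ) : ℂ) by push_cast; ring,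
      show (1 - (u:ℂ)) = ((1 - u : ℝ) : ℂ) by push_cast; ring,
      ← Complex.ofReal_cpow hu.1, ← Complex.ofReal_cpow (by linarith [hu.2] : (0:ℝ) ≤ 1 - u),
      ← Complex.ofReal_mul]
  rw [hb, show ((x:ℂ) + (y:ℂ)) = ((x + y : ℝ) : ℂ) by push_cast; ring,
    Complex.Gamma_ofReal, Complex.Gamma_ofReal, Complex.Gamma_ofReal] at h
  have h' : Real.Gamma x * Real.Gamma y
      = Real.Gamma (x+y) * ∫ u in (0:ℝ)..1, u ^ (x-1) * (1-u) ^ (y-1) := by exact_mod_cast h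
  have hΓpos : 0 < Real.Gamma (x+y) := Real.Gamma_pos_of_pos (by linarith)
  field_simp
  linarith [h']

/-- Integrability of the Beta-type integrand on `(0,1)`. -/
lemma integrableOn_beta01 {x y : ℝ} (hx : 0 < x) (hy : 0 < y) :
    IntegrableOn (fun u : ℝ => u ^ (x-1) * (1-u) ^ (y-1)) (Set.Ioc 0 1) := by
  have h := Complex.betaIntegral_convergent (u := (x:ℂ)) (v := (y:ℂ))
    (by simpa using hx) (by simpa using hy)
  rw [intervalIntegrable_iff_integrableOn_Ioc_of_le (by norm_num)] at h
  apply h.re.congr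
  filter_upwards [ae_restrict_mem measurableSet_Ioc] with u hu
  have h0 : (0:ℝ) ≤ u := le_of_lt hu.1
  have h1 : (0:ℝ) ≤ 1 - u := by linarith [hu.2]
  have he : ((u:ℂ) ^ ((x:ℂ) - 1) * (1 - (u:ℂ)) ^ ((y:ℂ) - 1))
      = ((u ^ (x-1) * (1-u) ^ (y-1) : ℝ) : ℂ) := by
    rw [show ((x:ℂ) - 1) = ((x - 1 : ℝ) : ℂ) by push_cast; ring,
      show ((y:ℂ) - 1) = ((y - 1 : ℝ) : ℂ) by push_cast; ring,
      show (1 - (u:ℂ)) = ((1 - u : ℝ) : ℂ) by push_cast; ring,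
      ← Complex.ofReal_cpow h0, ← Complex.ofReal_cpow h1, ← Complex.ofReal_mul]
  simp [he]

lemma integrableOn_beta_Ioo {t x y : ℝ} (ht : 0 < t) (hx : 0 < x) (hy : 0 < y) :
    IntegrableOn (fun s : ℝ => (t-s) ^ (x-1) * s ^ (y-1)) (Set.Ioo 0 t) := by
  have hG : IntervalIntegrable (fun u : ℝ => u ^ (y-1) * (1-u) ^ (x-1)) volume 0 1 :=
    (intervalIntegrable_iff_integrableOn_Ioc_of_le (by norm_num)).mpr (integrableOn_beta01 hy hx)
  have hG2 := (hG.comp_mul_left (c := t⁻¹)).const_mul (t ^ (x+y-2))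
  have hend : (1:ℝ)/t⁻¹ = t := by field_simp
  have hend0 : (0:ℝ)/t⁻¹ = 0 := by simp
  rw [hend0, hend] at hG2
  have hG3 : IntegrableOn (fun s : ℝ => t ^ (x+y-2) * ((t⁻¹ * s) ^ (y-1) * (1 - t⁻¹*s) ^ (x-1)))
      (Set.Ioo 0 t) :=
    ((intervalIntegrable_iff_integrableOn_Ioc_of_le ht.le).mp hG2).mono_set Set.Ioo_subset_Ioc_self
  apply hG3.congr
  filter_upwards [ae_restrict_mem measurableSet_Ioo] with s hs
  obtain ⟨hs0, hst⟩ := hs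
  have h1 : t⁻¹ * s = s / t := by ring
  have h2 : 1 - s / t = (t - s) / t := by field_simp
  rw [h1, h2, Real.div_rpow hs0.le ht.le, Real.div_rpow (by linarith) ht.le]
  rw [show x + y - 2 = (x-1) + (y-1) by ring, Real.rpow_add ht]
  have e1 : (0:ℝ) < t ^ (x-1) := Real.rpow_pos_of_pos ht _
  have e2 : (0:ℝ) < t ^ (y-1) := Real.rpow_pos_of_pos ht _
  field_simp

lemma integral_beta_Ioo {t x y : ℝ} (ht : 0 < t) (hx : 0 < x) (hy : 0 < y) :
    ∫ s in Set.Ioo (0:ℝ) t, (t-s) ^ (x-1) * s ^ (y-1)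
      = Real.Gamma x * Real.Gamma y / Real.Gamma (x+y) * t ^ (x+y-1) := by
  rw [← MeasureTheory.integral_Ioc_eq_integral_Ioo, ← intervalIntegral.integral_of_le ht.le]
  have hsub := intervalIntegral.integral_comp_mul_left (a := 0) (b := 1) (c := t)
    (fun s => (t-s) ^ (x-1) * s ^ (y-1)) ht.ne'
  rw [mul_zero, mul_one, smul_eq_mul] at hsub
  have ht' : (∫ s in (0:ℝ)..t, (t-s) ^ (x-1) * s ^ (y-1))
      = t * ∫ u in (0:ℝ)..1, (t - t*u) ^ (x-1) * (t*u) ^ (y-1) := by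
    rw [hsub]; field_simp
  rw [ht']
  have hcongr : (∫ u in (0:ℝ)..1, (t - t*u) ^ (x-1) * (t*u) ^ (y-1))
      = ∫ u in (0:ℝ)..1, (t ^ (x-1) * t ^ (y-1)) * (u ^ (y-1) * (1-u) ^ (x-1)) := by
    apply intervalIntegral.integral_congr
    intro u hu
    rw [Set.uIcc_of_le (by norm_num : (0:ℝ) ≤ 1)] at hu
    beta_reduce
    rw [show t - t*u = t * (1-u) by ring, Real.mul_rpow ht.le (by linarith [hu.2]),
      Real.mul_rpow ht.le hu.1]
    ring
  rw [hcongr, intervalIntegral.integral_const_mul, integral_beta01 hy hx]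
  have e0 : 0 < t ^ (x-1) := Real.rpow_pos_of_pos ht _
  rw [show Real.Gamma (y + x) = Real.Gamma (x+y) by rw [add_comm],
    show t ^ (x+y-1) = t ^ (1:ℝ) * (t ^ (x-1) * t ^ (y-1)) by
      rw [← Real.rpow_add ht, ← Real.rpow_add ht]; ring_nf,
    Real.rpow_one]
  ring

lemma summable_ml_norm {a b g : ℝ} (x : ℝ) (ha : 0 < a) (hb : 0 < b) (hg : 0 ≤ g) :
    Summable (fun k : ℕ => ‖poch g k * x ^ k /
      (Real.Gamma ((k : ℝ) * a + b) * (Nat.factorial k : ℝ))‖) := by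
  apply Summable.of_nonneg_of_le (fun k => norm_nonneg _) _
    (summable_ml_aux (x := |x|) ha hb hg one_pos (abs_nonneg x))
  intro k
  have hΓ : 0 < Real.Gamma ((k : ℝ) * a + b) := Real.Gamma_pos_of_pos (by positivity)
  have hfac : (0:ℝ) < (Nat.factorial k : ℝ) := by positivity
  rw [Real.norm_eq_abs, abs_div, abs_mul, abs_pow, abs_of_nonneg (poch_nonneg hg k),
    abs_of_pos (mul_pos hΓ hfac)]
  have h0 : 0 ≤ poch g k * |x| ^ k *
      (Real.Gamma ((k : ℝ) * a + b) * (Nat.factorial k : ℝ)) * (k:ℝ) :=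
    mul_nonneg (mul_nonneg (mul_nonneg (poch_nonneg hg k) (pow_nonneg (abs_nonneg x) k))
      (mul_pos hΓ hfac).le) (Nat.cast_nonneg k)
  rw [div_le_div_iff₀ (mul_pos hΓ hfac) (mul_pos hΓ hfac)]
  nlinarith [h0]

lemma summable_ml {a b g : ℝ} (x : ℝ) (ha : 0 < a) (hb : 0 < b) (hg : 0 ≤ g) :
    Summable (fun k : ℕ => poch g k * x ^ k /
      (Real.Gamma ((k : ℝ) * a + b) * (Nat.factorial k : ℝ))) :=
  (summable_ml_norm x ha hb hg).of_norm

lemma integral_beta_Ioo' {t a b : ℝ} (ht : 0 < t) (ha : 0 < a) (hb : 0 ≤ b) :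
    ∫ s in Set.Ioo (0:ℝ) t, (t-s) ^ (a-1) * s ^ b
      = Real.Gamma a * Real.Gamma (b+1) / Real.Gamma (a+b+1) * t ^ (a+b) := by
  have h := integral_beta_Ioo ht ha (show 0 < b+1 by linarith)
  rw [show b+1-1 = b by ring, show a+(b+1)-1 = a+b by ring, show a+(b+1) = a+b+1 by ring] at h
  exact h

lemma integrableOn_beta_Ioo' {t a b : ℝ} (ht : 0 < t) (ha : 0 < a) (hb : 0 ≤ b) :
    IntegrableOn (fun s : ℝ => (t-s) ^ (a-1) * s ^ b) (Set.Ioo 0 t) := by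
  have h := integrableOn_beta_Ioo ht ha (show 0 < b+1 by linarith)
  rw [show b+1-1 = b by ring] at h
  exact h

lemma Gamma_mul_Gamma_le {x y : ℝ} (hx : 1 ≤ x) (hy : 1 ≤ y) :
    Real.Gamma x * Real.Gamma y ≤ Real.Gamma (x+y) := by
  have hx0 : 0 < x := by linarith
  have hy0 : 0 < y := by linarith
  have hB := integral_beta01 hx0 hy0
  have hle : (∫ u in (0:ℝ)..1, u ^ (x-1) * (1-u) ^ (y-1)) ≤ ∫ _u in (0:ℝ)..1, (1:ℝ) := by
    apply intervalIntegral.integral_mono_on (by norm_num)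
    · exact (intervalIntegrable_iff_integrableOn_Ioc_of_le (by norm_num)).mpr
        (integrableOn_beta01 hx0 hy0)
    · exact intervalIntegrable_const
    · intro u hu
      have h1 : u ^ (x-1) ≤ 1 := Real.rpow_le_one hu.1 hu.2 (by linarith)
      have h2 : (1-u) ^ (y-1) ≤ 1 := Real.rpow_le_one (by linarith [hu.2]) (by linarith [hu.1])
        (by linarith)
      have h3 : (0:ℝ) ≤ u ^ (x-1) := Real.rpow_nonneg hu.1 _
      nlinarith [Real.rpow_nonneg (by linarith [hu.2] : (0:ℝ) ≤ 1-u) (y-1)]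
  simp only [intervalIntegral.integral_const, smul_eq_mul, mul_one, sub_zero] at hle
  rw [hB] at hle
  have hΓ : 0 < Real.Gamma (x+y) := Real.Gamma_pos_of_pos (by linarith)
  rw [div_le_one hΓ] at hle
  exact hle

lemma beta_factor_le {A B c : ℝ} (hc : 0 < c) (hcA : c ≤ A) (hB : 0 ≤ B) :
    Real.Gamma A * Real.Gamma (B+1) ≤ ((c + B + 1)/c) * Real.Gamma (A+B+1) := by
  have hA : 0 < A := lt_of_lt_of_le hc hcA
  have key : Real.Gamma (A+1) * Real.Gamma (B+1) ≤ Real.Gamma (A+B+2) := by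
    have h := Gamma_mul_Gamma_le (x := A+1) (y := B+1) (by linarith) (by linarith)
    rw [show A+1+(B+1) = A+B+2 by ring] at h
    exact h
  rw [Real.Gamma_add_one hA.ne'] at key
  rw [show A+B+2 = (A+B+1)+1 by ring, Real.Gamma_add_one (by positivity : A+B+1 ≠ 0)] at key
  have hΓ1 : 0 < Real.Gamma (A+B+1) := Real.Gamma_pos_of_pos (by positivity)
  have hΓA : 0 < Real.Gamma A := Real.Gamma_pos_of_pos hA
  have hΓB : 0 < Real.Gamma (B+1) := Real.Gamma_pos_of_pos (by positivity)
  -- key : A * Γ A * Γ (B+1) ≤ (A+B+1) * Γ (A+B+1)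
  rw [div_mul_eq_mul_div, le_div_iff₀ hc]
  -- goal : Γ A * Γ (B+1) * c ≤ (c+B+1) * Γ(A+B+1)
  have h2 : (A+B+1) * c ≤ (c+B+1) * A := by nlinarith
  nlinarith [mul_le_mul_of_nonneg_right key hc.le]

lemma rpow_deco {t : ℝ} (ht : 0 < t) (a b : ℝ) (n : ℕ) :
    t ^ (a + (n:ℝ)*b) = t ^ a * (t ^ b) ^ n := by
  rw [Real.rpow_add ht, ← Real.rpow_natCast (t^b) n, ← Real.rpow_mul ht.le]
  ring_nf

/-- The `k`-th coefficient of the Prabhakar Mittag-Leffler series. -/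
noncomputable def mlCoef (a b g x : ℝ) (k : ℕ) : ℝ :=
  poch g k * x ^ k / (Real.Gamma ((k : ℝ) * a + b) * (Nat.factorial k : ℝ))

lemma ml3_eq (a b g x : ℝ) : ml3 a b g x = ∑' k : ℕ, mlCoef a b g x k := rfl

lemma mlCoef_nonneg {a b g x : ℝ} (ha : 0 < a) (hb : 0 < b) (hg : 0 ≤ g) (hx : 0 ≤ x) (k : ℕ) :
    0 ≤ mlCoef a b g x k := by
  have hΓ : 0 < Real.Gamma ((k : ℝ) * a + b) := Real.Gamma_pos_of_pos (by positivity)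
  have h1 := poch_nonneg hg k
  unfold mlCoef
  positivity

lemma mlCoef_abs {a b g x : ℝ} (ha : 0 < a) (hb : 0 < b) (hg : 0 ≤ g) (k : ℕ) :
    |mlCoef a b g x k| = mlCoef a b g |x| k := by
  have hΓ : 0 < Real.Gamma ((k : ℝ) * a + b) := Real.Gamma_pos_of_pos (by positivity)
  have hfac : (0:ℝ) < (Nat.factorial k : ℝ) := by positivity
  unfold mlCoef
  rw [abs_div, abs_mul, abs_pow, abs_of_nonneg (poch_nonneg hg k),
    abs_of_pos (mul_pos hΓ hfac)]

lemma mlCoef_mul_pow (a b g x y : ℝ) (k : ℕ) :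
    mlCoef a b g (x * y) k = mlCoef a b g x k * y ^ k := by
  unfold mlCoef
  rw [mul_pow]
  ring

lemma summable_mlCoef_weight {a b g x c : ℝ} (ha : 0 < a) (hb : 0 < b) (hg : 0 ≤ g)
    (hc : 0 < c) (hx : 0 ≤ x) :
    Summable (fun k : ℕ => mlCoef a b g x k * (c + k)) := by
  apply (summable_ml_aux ha hb hg hc hx).congr
  intro k
  simp only [mlCoef]
  ring

lemma summable_mlCoef_norm {a b g : ℝ} (x : ℝ) (ha : 0 < a) (hb : 0 < b) (hg : 0 ≤ g) :
    Summable (fun k : ℕ => ‖mlCoef a b g x k‖) := by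
  apply (summable_ml_norm x ha hb hg).congr
  intro k
  simp only [mlCoef]

lemma summable_mlCoef {a b g : ℝ} (x : ℝ) (ha : 0 < a) (hb : 0 < b) (hg : 0 ≤ g) :
    Summable (fun k : ℕ => mlCoef a b g x k) :=
  (summable_mlCoef_norm x ha hb hg).of_norm

theorem stmt15 (α ρ' β β' g γ' α' p : ℝ) (hα : 0 < α) (hρ' : 0 < ρ') (hβ : 0 < β)
    (hβ' : 0 < β') (hg : 0 ≤ g) (hγ' : 0 ≤ γ') (hα' : 0 < α') (hp : 0 ≤ p) :
    ∀ t > (0 : ℝ),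
      ∫ s in (0 : ℝ)..t, (t - s) ^ (ρ' - 1) * ml3 α' ρ' γ' (β' * (t - s) ^ α') *
          (s ^ p * ml3 α (p + 1) g (-β * s ^ α))
        = ∑' r : ℕ, β' ^ r * poch γ' r / (Nat.factorial r : ℝ) *
            t ^ (p + ρ' + (r : ℝ) * α') *
            ml3 α (p + ρ' + (r : ℝ) * α' + 1) g (-β * t ^ α) := by
  intro t ht
  set F : ℕ × ℕ → ℝ → ℝ := fun rk s =>
    mlCoef α' ρ' γ' β' rk.1 * mlCoef α (p+1) g (-β) rk.2 *
      ((t - s) ^ (ρ' + (rk.1:ℝ) * α' - 1) * s ^ (p + (rk.2:ℝ) * α)) with hF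
  set G : ℕ × ℕ → ℝ := fun rk =>
    β' ^ rk.1 * poch γ' rk.1 / (Nat.factorial rk.1 : ℝ) * t ^ (p + ρ' + (rk.1:ℝ) * α') *
      mlCoef α (p + ρ' + (rk.1:ℝ) * α' + 1) g (-β * t ^ α) rk.2 with hG
  have hApos : ∀ r : ℕ, 0 < ρ' + (r:ℝ) * α' := fun r => by positivity
  have hBnn : ∀ k : ℕ, (0:ℝ) ≤ p + (k:ℝ) * α := fun k => by positivity
  -- pointwise expansion of the integrand as a double series
  have hPoint : Set.EqOn
      (fun s => (t - s) ^ (ρ' - 1) * ml3 α' ρ' γ' (β' * (t - s) ^ α') *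
          (s ^ p * ml3 α (p + 1) g (-β * s ^ α)))
      (fun s => ∑' rk : ℕ × ℕ, F rk s) (Set.Ioo 0 t) := by
    intro s hs
    obtain ⟨hs0, hst⟩ := hs
    have hts : 0 < t - s := by linarith
    have hφe : ∀ r : ℕ, (t-s) ^ (ρ'-1) * mlCoef α' ρ' γ' (β' * (t-s) ^ α') r
        = mlCoef α' ρ' γ' β' r * (t-s) ^ (ρ' + (r:ℝ) * α' - 1) := by
      intro r
      unfold mlCoef
      rw [mul_pow, ← Real.rpow_natCast ((t-s) ^ α') r, ← Real.rpow_mul hts.le,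
        show ρ' + (r:ℝ) * α' - 1 = (ρ' - 1) + α' * (r:ℝ) by ring, Real.rpow_add hts]
      ring
    have hψe : ∀ k : ℕ, s ^ p * mlCoef α (p+1) g (-β * s ^ α) k
        = mlCoef α (p+1) g (-β) k * s ^ (p + (k:ℝ) * α) := by
      intro k
      unfold mlCoef
      rw [mul_pow, ← Real.rpow_natCast (s ^ α) k, ← Real.rpow_mul hs0.le,
        show p + (k:ℝ) * α = p + α * (k:ℝ) by ring, Real.rpow_add hs0]
      ring
    have h1 : (t-s) ^ (ρ'-1) * ml3 α' ρ' γ' (β' * (t-s) ^ α')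
        = ∑' r : ℕ, mlCoef α' ρ' γ' β' r * (t-s) ^ (ρ' + (r:ℝ) * α' - 1) := by
      rw [ml3_eq, ← tsum_mul_left]
      exact tsum_congr hφe
    have h2 : s ^ p * ml3 α (p+1) g (-β * s ^ α)
        = ∑' k : ℕ, mlCoef α (p+1) g (-β) k * s ^ (p + (k:ℝ) * α) := by
      rw [ml3_eq, ← tsum_mul_left]
      exact tsum_congr hψe
    have hsum1 : Summable (fun r : ℕ => ‖mlCoef α' ρ' γ' β' r * (t-s) ^ (ρ' + (r:ℝ)*α' - 1)‖) := by
      apply ((summable_mlCoef_norm (β' * (t-s) ^ α') hα' hρ' hγ').mul_left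
        ((t-s) ^ (ρ'-1))).congr
      intro r
      rw [← hφe r, norm_mul, Real.norm_eq_abs ((t-s) ^ (ρ'-1)),
        abs_of_nonneg (Real.rpow_nonneg hts.le _)]
    have hsum2 : Summable (fun k : ℕ => ‖mlCoef α (p+1) g (-β) k * s ^ (p + (k:ℝ)*α)‖) := by
      apply ((summable_mlCoef_norm (-β * s ^ α) hα (show (0:ℝ) < p + 1 by linarith) hg).mul_left (s ^ p)).congr
      intro k
      rw [← hψe k, norm_mul, Real.norm_eq_abs (s ^ p),
        abs_of_nonneg (Real.rpow_nonneg hs0.le _)]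
    beta_reduce
    rw [h1, h2, tsum_mul_tsum_of_summable_norm hsum1 hsum2]
    apply tsum_congr
    intro rk
    rw [hF]
    ring
  -- measurability and integrability of each term
  have hmeas : ∀ rk : ℕ × ℕ, AEStronglyMeasurable (F rk)
      (volume.restrict (Set.Ioo (0:ℝ) t)) := by
    intro rk
    apply Measurable.aestronglyMeasurable
    rw [hF]
    fun_prop
  have hIntegrable : ∀ rk : ℕ × ℕ, IntegrableOn (F rk) (Set.Ioo (0:ℝ) t) := by
    intro rk
    exact (integrableOn_beta_Ioo' ht (hApos rk.1) (hBnn rk.2)).const_mul _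
  -- value of the integral of the norm
  have hIntVal : ∀ rk : ℕ × ℕ, ∫ s in Set.Ioo (0:ℝ) t, ‖F rk s‖
      = |mlCoef α' ρ' γ' β' rk.1 * mlCoef α (p+1) g (-β) rk.2| *
          (Real.Gamma (ρ' + (rk.1:ℝ)*α') * Real.Gamma (p + (rk.2:ℝ)*α + 1) /
            Real.Gamma (ρ' + (rk.1:ℝ)*α' + (p + (rk.2:ℝ)*α) + 1) *
              t ^ (ρ' + (rk.1:ℝ)*α' + (p + (rk.2:ℝ)*α))) := by
    intro rk
    rw [← integral_beta_Ioo' ht (hApos rk.1) (hBnn rk.2), ← integral_const_mul]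
    apply setIntegral_congr_fun measurableSet_Ioo
    intro s hs
    obtain ⟨hs0, hst⟩ := hs
    rw [hF]
    beta_reduce
    rw [Real.norm_eq_abs, abs_mul,
      abs_of_nonneg (mul_nonneg (Real.rpow_nonneg (by linarith) _) (Real.rpow_nonneg hs0.le _))]
  -- summable upper bound
  set Φ : ℕ → ℝ := fun r => mlCoef α' ρ' γ' (β' * t ^ α') r with hΦdef
  set Ψ : ℕ → ℝ := fun k => mlCoef α (p+1) g (β * t ^ α) k * ((ρ'+p+1)/α + k) with hΨdef
  have hΦ : Summable Φ := summable_mlCoef _ hα' hρ' hγ'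
  have hΨ : Summable Ψ := summable_mlCoef_weight hα (by linarith) hg (by positivity)
    (by positivity)
  have hΦnn : ∀ r, 0 ≤ Φ r := fun r =>
    mlCoef_nonneg hα' hρ' hγ' (by positivity) r
  have hΨnn : ∀ k, 0 ≤ Ψ k := fun k =>
    mul_nonneg (mlCoef_nonneg hα (by linarith) hg (by positivity) k) (by positivity)
  have hSB : Summable (fun rk : ℕ × ℕ => (α/ρ' * t ^ (ρ'+p)) * (Φ rk.1 * Ψ rk.2)) :=
    (hΦ.mul_of_nonneg hΨ hΦnn hΨnn).mul_left _
  have hBnd : ∀ rk : ℕ × ℕ,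
      |mlCoef α' ρ' γ' β' rk.1 * mlCoef α (p+1) g (-β) rk.2| *
          (Real.Gamma (ρ' + (rk.1:ℝ)*α') * Real.Gamma (p + (rk.2:ℝ)*α + 1) /
            Real.Gamma (ρ' + (rk.1:ℝ)*α' + (p + (rk.2:ℝ)*α) + 1) *
              t ^ (ρ' + (rk.1:ℝ)*α' + (p + (rk.2:ℝ)*α)))
        ≤ (α/ρ' * t ^ (ρ'+p)) * (Φ rk.1 * Ψ rk.2) := by
    rintro ⟨r, k⟩
    have hΓAB : 0 < Real.Gamma (ρ' + (r:ℝ)*α' + (p + (k:ℝ)*α) + 1) :=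
      Real.Gamma_pos_of_pos (by positivity)
    have h1 : Real.Gamma (ρ' + (r:ℝ)*α') * Real.Gamma (p + (k:ℝ)*α + 1) /
        Real.Gamma (ρ' + (r:ℝ)*α' + (p + (k:ℝ)*α) + 1) ≤ α/ρ' * ((ρ'+p+1)/α + k) := by
      rw [div_le_iff₀ hΓAB]
      calc Real.Gamma (ρ' + (r:ℝ)*α') * Real.Gamma (p + (k:ℝ)*α + 1)
          ≤ ((ρ' + (p + (k:ℝ)*α) + 1)/ρ') *
              Real.Gamma (ρ' + (r:ℝ)*α' + (p + (k:ℝ)*α) + 1) := by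
            exact beta_factor_le (c := ρ') (A := ρ' + (r:ℝ)*α') (B := p + (k:ℝ)*α)
              hρ' (le_add_of_nonneg_right (by positivity)) (hBnn k)
        _ = (α/ρ' * ((ρ'+p+1)/α + k)) * Real.Gamma (ρ' + (r:ℝ)*α' + (p + (k:ℝ)*α) + 1) := by
            rw [show (ρ' + (p + (k:ℝ)*α) + 1)/ρ' = α/ρ' * ((ρ'+p+1)/α + k) by
              field_simp; ring]
    have hdec : t ^ (ρ' + (r:ℝ)*α' + (p + (k:ℝ)*α))
        = t ^ (ρ'+p) * ((t ^ α') ^ r * (t ^ α) ^ k) := by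
      rw [show ρ' + (r:ℝ)*α' + (p + (k:ℝ)*α) = ((ρ'+p) + (r:ℝ)*α') + (k:ℝ)*α by ring,
        rpow_deco ht ((ρ'+p) + (r:ℝ)*α') α k, rpow_deco ht (ρ'+p) α' r]
      ring
    rw [abs_mul, mlCoef_abs hα' hρ' hγ', mlCoef_abs hα (by linarith) hg,
      abs_of_pos hβ', abs_neg, abs_of_pos hβ, hdec, hΦdef, hΨdef]
    beta_reduce
    rw [mlCoef_mul_pow α' ρ' γ' β' (t ^ α') r, mlCoef_mul_pow α (p+1) g β (t ^ α) k]
    have hcommon : 0 ≤ mlCoef α' ρ' γ' β' r * (t ^ α') ^ r *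
        (mlCoef α (p+1) g β k * (t ^ α) ^ k) * t ^ (ρ'+p) :=
      mul_nonneg (mul_nonneg (mul_nonneg (mlCoef_nonneg hα' hρ' hγ' hβ'.le r)
        (by positivity)) (mul_nonneg (mlCoef_nonneg hα (by linarith) hg hβ.le k)
          (by positivity))) (by positivity)
    calc mlCoef α' ρ' γ' β' r * mlCoef α (p+1) g β k *
          (Real.Gamma (ρ' + (r:ℝ)*α') * Real.Gamma (p + (k:ℝ)*α + 1) /
            Real.Gamma (ρ' + (r:ℝ)*α' + (p + (k:ℝ)*α) + 1) *
              (t ^ (ρ'+p) * ((t ^ α') ^ r * (t ^ α) ^ k)))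
        = (mlCoef α' ρ' γ' β' r * (t ^ α') ^ r * (mlCoef α (p+1) g β k * (t ^ α) ^ k) *
            t ^ (ρ'+p)) *
            (Real.Gamma (ρ' + (r:ℝ)*α') * Real.Gamma (p + (k:ℝ)*α + 1) /
              Real.Gamma (ρ' + (r:ℝ)*α' + (p + (k:ℝ)*α) + 1)) := by ring
      _ ≤ (mlCoef α' ρ' γ' β' r * (t ^ α') ^ r * (mlCoef α (p+1) g β k * (t ^ α) ^ k) *
            t ^ (ρ'+p)) * (α/ρ' * ((ρ'+p+1)/α + k)) :=
          mul_le_mul_of_nonneg_left h1 hcommon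
      _ = α/ρ' * t ^ (ρ'+p) * (mlCoef α' ρ' γ' β' r * (t ^ α') ^ r *
            (mlCoef α (p+1) g β k * (t ^ α) ^ k * ((ρ'+p+1)/α + (k:ℝ)))) := by ring
  -- summability of the norm integrals
  have hWs : Summable (fun rk : ℕ × ℕ => ∫ s in Set.Ioo (0:ℝ) t, ‖F rk s‖) := by
    apply Summable.of_nonneg_of_le
      (fun rk => integral_nonneg (fun s => norm_nonneg _)) _ hSB
    intro rk
    rw [hIntVal rk]
    exact hBnd rk
  -- the lintegral condition for integral_tsum
  have hlint : (∑' rk : ℕ × ℕ, ∫⁻ s, ‖F rk s‖₊ ∂(volume.restrict (Set.Ioo (0:ℝ) t))) ≠ ⊤ := by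
    have heq : ∀ rk : ℕ × ℕ, (∫⁻ s, ‖F rk s‖₊ ∂(volume.restrict (Set.Ioo (0:ℝ) t)))
        = ENNReal.ofReal (∫ s in Set.Ioo (0:ℝ) t, ‖F rk s‖) :=
      fun rk => (ofReal_integral_norm_eq_lintegral_enorm (hIntegrable rk)).symm
    rw [tsum_congr heq, ← ENNReal.ofReal_tsum_of_nonneg
      (fun rk => integral_nonneg (fun s => norm_nonneg _)) hWs]
    exact ENNReal.ofReal_ne_top
  -- value of each integral
  have hGval : ∀ rk : ℕ × ℕ, (∫ s in Set.Ioo (0:ℝ) t, F rk s) = G rk := by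
    rintro ⟨r, k⟩
    rw [hF]
    beta_reduce
    rw [integral_const_mul, integral_beta_Ioo' ht (hApos r) (hBnn k), hG]
    beta_reduce
    have e1 : Real.Gamma (ρ' + (r:ℝ)*α') = Real.Gamma ((r:ℝ)*α' + ρ') := by rw [add_comm]
    have e2 : Real.Gamma (p + (k:ℝ)*α + 1) = Real.Gamma ((k:ℝ)*α + (p+1)) := by
      rw [show p + (k:ℝ)*α + 1 = (k:ℝ)*α + (p+1) by ring]
    have e3 : Real.Gamma (ρ' + (r:ℝ)*α' + (p + (k:ℝ)*α) + 1)
        = Real.Gamma ((k:ℝ)*α + (p + ρ' + (r:ℝ)*α' + 1)) := by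
      rw [show ρ' + (r:ℝ)*α' + (p + (k:ℝ)*α) + 1 = (k:ℝ)*α + (p + ρ' + (r:ℝ)*α' + 1) by ring]
    have e4 : t ^ (ρ' + (r:ℝ)*α' + (p + (k:ℝ)*α))
        = t ^ (p + ρ' + (r:ℝ)*α') * (t ^ α) ^ k := by
      rw [show ρ' + (r:ℝ)*α' + (p + (k:ℝ)*α) = (p + ρ' + (r:ℝ)*α') + (k:ℝ)*α by ring,
        rpow_deco ht _ α k]
    rw [e1, e2, e3, e4]
    unfold mlCoef
    have hΓ1 : 0 < Real.Gamma ((r:ℝ)*α' + ρ') := Real.Gamma_pos_of_pos (by positivity)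
    have hΓ2 : 0 < Real.Gamma ((k:ℝ)*α + (p+1)) := Real.Gamma_pos_of_pos (by positivity)
    have hΓ3 : 0 < Real.Gamma ((k:ℝ)*α + (p + ρ' + (r:ℝ)*α' + 1)) :=
      Real.Gamma_pos_of_pos (by positivity)
    have hfr : ((Nat.factorial r : ℝ)) ≠ 0 := by positivity
    have hfk : ((Nat.factorial k : ℝ)) ≠ 0 := by positivity
    rw [mul_pow (-β) (t ^ α) k]
    field_simp
  -- summability of the integrals
  have hSint : Summable (fun rk : ℕ × ℕ => ∫ s in Set.Ioo (0:ℝ) t, F rk s) := by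
    apply Summable.of_norm
    apply Summable.of_nonneg_of_le (fun rk => norm_nonneg _)
      (fun rk => norm_integral_le_integral_norm _) hWs
  have hSG : Summable G := hSint.congr hGval
  -- assemble
  rw [intervalIntegral.integral_of_le ht.le, MeasureTheory.integral_Ioc_eq_integral_Ioo,
    setIntegral_congr_fun measurableSet_Ioo hPoint,
    MeasureTheory.integral_tsum hmeas hlint, tsum_congr hGval, Summable.tsum_prod hSG]
  apply tsum_congr
  intro r
  simp only [hG]
  rw [tsum_mul_left, ← ml3_eq]
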